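/- Let (M,ρ) be a complete metric space, let f : M → ℝ ∪ {+∞} be proper, lower semicontinuous and bounded below, and let g : M → ℝ be continuous with |∇f|(x) > |∇g|(x) for every x ∈ dom f with |∇f|(x) ≠ 0. Then for any x₀ ∈ dom f at least one of the following holds: (a) there exists x̄ with |∇f|(x̄) = 0 and f(x₀) - g(x₀) ≥ f(x̄) - g(x̄); or (b) for every sequence εₙ strictly decreasing to 0 there exists a sequence (xₙ)_{n≥1} with |∇f|(xₙ) ≤ εₙ for each n, having no convergent subsequence, satisfying Σ_{n≥1} εₙ·ρ(xₙ, xₙ₋₁) < ∞ and f(xₙ) - g(xₙ) ≥ f(xₙ₊₁) - g(xₙ₊₁) for all n ≥ 0. -/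

import Mathlib

open Filter Topology ENNReal

/-- The positive part `[x]⁺` of an extended real, as an element of `ℝ≥0∞`. -/
noncomputable def erealPos (x : EReal) : ℝ≥0∞ := if x = ⊤ then ⊤ else ENNReal.ofReal x.toReal

/-- The global slope `|∇̃ f|(x) = sup_{y ≠ x} [f x - f y]⁺ / ρ(x,y)` of `f : M → ℝ ∪ {+∞}`. -/
noncomputable def globalSlope {M : Type*} [MetricSpace M] (f : M → EReal) (x : M) : ℝ≥0∞ :=
  ⨆ y ∈ {y : M | y ≠ x}, erealPos (f x - f y) / edist x y

/-- The local slope `|∇ f|(x) = limsup_{y → x, y ≠ x} [f x - f y]⁺ / ρ(x,y)`. -/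
noncomputable def localSlope {M : Type*} [MetricSpace M] (f : M → EReal) (x : M) : ℝ≥0∞ :=
  Filter.limsup (fun y => erealPos (f x - f y) / edist x y) (𝓝[≠] x)

/-- `ε`-global-critical points: `x ∈ dom f` with `f y ≥ f x - ε·ρ(y,x)` for all `y`. -/
def epsCrit {M : Type*} [MetricSpace M] (ε : ℝ) (f : M → EReal) : Set M :=
  {x | f x ≠ ⊤ ∧ ∀ y, f x - ↑(ε * dist y x) ≤ f y}

open NNReal

section Helpers

lemma erealPos_coe (r : ℝ) : erealPos (r : EReal) = ENNReal.ofReal r := by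
  simp [erealPos, EReal.coe_ne_top]

lemma erealPos_bot : erealPos ⊥ = 0 := by simp [erealPos]

lemma erealPos_mono {a b : EReal} (h : a ≤ b) : erealPos a ≤ erealPos b := by
  rcases eq_or_ne b ⊤ with hb | hb
  · simp [erealPos, hb]
  · have ha : a ≠ ⊤ := by rintro rfl; exact hb (top_le_iff.mp h)
    rcases eq_or_ne a ⊥ with rfl | ha'
    · simp [erealPos_bot]
    · have hb' : b ≠ ⊥ := by rintro rfl; exact ha' (le_bot_iff.mp h)
      simp only [erealPos, if_neg ha, if_neg hb]
      exact ENNReal.ofReal_le_ofReal (EReal.toReal_le_toReal h ha' hb)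

lemma ereal_sub_le_coe {a b : EReal} {c : ℝ} : a - b ≤ (c : EReal) ↔ a ≤ (c : EReal) + b :=
  EReal.sub_le_iff_le_add (Or.inr (EReal.coe_ne_top c)) (Or.inr (EReal.coe_ne_bot c))

lemma ereal_sub_coe_le {a c : EReal} {r : ℝ} : a - (r : EReal) ≤ c ↔ a ≤ c + (r : EReal) :=
  EReal.sub_le_iff_le_add (Or.inl (EReal.coe_ne_bot r)) (Or.inl (EReal.coe_ne_top r))

lemma div_edist_le {M : Type*} [MetricSpace M] {x y : M} (hxy : y ≠ x) {a : EReal} {t : ℝ}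
    (ht : 0 ≤ t) (h : a ≤ ((t * dist y x : ℝ) : EReal)) :
    erealPos a / edist x y ≤ ENNReal.ofReal t := by
  have h1 : erealPos a ≤ ENNReal.ofReal (t * dist y x) := by
    calc erealPos a ≤ erealPos ((t * dist y x : ℝ) : EReal) := erealPos_mono h
    _ = ENNReal.ofReal (t * dist y x) := erealPos_coe _
  calc erealPos a / edist x y ≤ ENNReal.ofReal (t * dist y x) / edist x y :=
        ENNReal.div_le_div_right h1 _
  _ = ENNReal.ofReal t * (ENNReal.ofReal (dist x y) / ENNReal.ofReal (dist x y)) := by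
        rw [ENNReal.ofReal_mul ht, dist_comm y x, edist_dist, mul_div_assoc]
  _ = ENNReal.ofReal t := by
        rw [ENNReal.div_self (by simpa [ENNReal.ofReal_eq_zero, not_le] using dist_pos.mpr hxy.symm)
          ENNReal.ofReal_ne_top, mul_one]

lemma erealPos_sub_sub {a b : EReal} {u w : ℝ} (ha : a ≠ ⊤) (ha' : a ≠ ⊥)
    (h : a - (u : EReal) ≤ b - (w : EReal)) : erealPos (a - b) ≤ ENNReal.ofReal (u - w) := by
  rcases eq_or_ne b ⊤ with rfl | hb
  · rw [EReal.sub_top, erealPos_bot]; exact zero_le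
  · rcases eq_or_ne b ⊥ with rfl | hb'
    · exfalso
      rw [EReal.bot_sub] at h
      have h2 : a - (u : EReal) = ⊥ := le_bot_iff.mp h
      rw [← EReal.coe_toReal ha ha', ← EReal.coe_sub] at h2
      exact EReal.coe_ne_bot _ h2
    · lift a to ℝ using ⟨ha, ha'⟩
      lift b to ℝ using ⟨hb, hb'⟩
      rw [← EReal.coe_sub, ← EReal.coe_sub, EReal.coe_le_coe_iff] at h
      rw [← EReal.coe_sub, erealPos_coe]
      exact ENNReal.ofReal_le_ofReal (by linarith)

lemma localSlope_le_of_pointwise {M : Type*} [MetricSpace M] (f g' : M → EReal) (x : M)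
    (δ' : ℝ≥0∞)
    (h : ∀ y, y ≠ x → erealPos (f x - f y) / edist x y ≤ δ' ⊔ erealPos (g' x - g' y) / edist x y)
    (hlt : localSlope g' x < localSlope f x) : localSlope f x ≤ δ' := by
  by_contra hc
  push_neg at hc
  obtain ⟨c, hc1, hc2⟩ := exists_between hlt
  have hev : ∀ᶠ y in 𝓝[≠] x, erealPos (g' x - g' y) / edist x y < c :=
    Filter.eventually_lt_of_limsup_lt hc1
  have hev2 : ∀ᶠ y in 𝓝[≠] x, erealPos (f x - f y) / edist x y ≤ δ' ⊔ c := by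
    filter_upwards [hev, eventually_mem_nhdsWithin] with y h1 h2
    exact (h y h2).trans (sup_le_sup_left h1.le _)
  have hfin : localSlope f x ≤ δ' ⊔ c := Filter.limsup_le_of_le (by isBoundedDefault) hev2
  exact absurd hfin (not_le.2 (sup_lt_iff.2 ⟨hc, hc2⟩))

lemma ekeland_ennreal {M : Type*} [MetricSpace M] [CompleteSpace M] (F : M → ℝ≥0∞)
    (hF : LowerSemicontinuous F) (x₀ : M) (h₀ : F x₀ ≠ ⊤) {δ : ℝ} (hδ : 0 < δ) :
    ∃ x', F x' + ENNReal.ofReal (δ * dist x' x₀) ≤ F x₀ ∧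
      ∀ y, F x' ≤ F y + ENNReal.ofReal (δ * dist y x') := by
  classical
  set D : M → Set M := fun x => {y | F y + ENNReal.ofReal (δ * dist y x) ≤ F x} with hD
  have hself : ∀ x, x ∈ D x := by intro x; simp [hD]
  have htrans : ∀ {x y z}, y ∈ D x → z ∈ D y → z ∈ D x := by
    intro x y z hy hz
    have h3 : ENNReal.ofReal (δ * dist z x) ≤
        ENNReal.ofReal (δ * dist z y) + ENNReal.ofReal (δ * dist y x) := by
      rw [← ENNReal.ofReal_add (by positivity) (by positivity)]
      apply ENNReal.ofReal_le_ofReal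
      nlinarith [dist_triangle z y x]
    calc F z + ENNReal.ofReal (δ * dist z x)
        ≤ (F z + ENNReal.ofReal (δ * dist z y)) + ENNReal.ofReal (δ * dist y x) := by
          rw [add_assoc]; exact add_le_add_right h3 _
      _ ≤ F y + ENNReal.ofReal (δ * dist y x) := add_le_add_left hz _
      _ ≤ F x := hy
  have hmem_le : ∀ {x y}, y ∈ D x → F y ≤ F x := fun {x y} hy => le_trans (le_add_right le_rfl) hy
  set m : M → ℝ≥0∞ := fun x => ⨅ y ∈ D x, F y with hm
  have h2k : ∀ k : ℕ, ((2 : ℝ≥0∞)⁻¹ ^ k) ≠ 0 :=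
    fun k => pow_ne_zero k (ENNReal.inv_ne_zero.2 ENNReal.ofNat_ne_top)
  have h2kt : ∀ k : ℕ, ((2 : ℝ≥0∞)⁻¹ ^ k) ≠ ⊤ :=
    fun k => ENNReal.pow_ne_top (ENNReal.inv_ne_top.2 two_ne_zero)
  have hstep : ∀ x : M, F x ≠ ⊤ → ∀ k : ℕ, ∃ y : M,
      (y ∈ D x ∧ F y ≠ ⊤) ∧ F y ≤ m x + 2⁻¹ ^ k := by
    intro x hx k
    have hmx : m x ≠ ⊤ := ne_top_of_le_ne_top hx (iInf₂_le x (hself x))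
    have hlt : (⨅ y ∈ D x, F y) < m x + 2⁻¹ ^ k := ENNReal.lt_add_right hmx (h2k k)
    rw [iInf_lt_iff] at hlt
    obtain ⟨y, hy⟩ := hlt
    rw [iInf_lt_iff] at hy
    obtain ⟨hyD, hylt⟩ := hy
    exact ⟨y, ⟨hyD, ne_top_of_lt (hylt.trans_le (le_of_eq (by rfl)))⟩,
      le_of_lt hylt⟩
  have hrec : ∀ (p : {p : M // F p ≠ ⊤}) (k : ℕ), ∃ y : M,
      (y ∈ D p.1 ∧ F y ≠ ⊤) ∧ F y ≤ m p.1 + 2⁻¹ ^ k := fun p k => hstep p.1 p.2 k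
  let s : ℕ → {p : M // F p ≠ ⊤} := fun k => Nat.rec ⟨x₀, h₀⟩
    (fun k p => ⟨(hrec p k).choose, (hrec p k).choose_spec.1.2⟩) k
  have hs0 : (s 0).1 = x₀ := rfl
  have hsD : ∀ k, (s (k+1)).1 ∈ D (s k).1 := fun k => (hrec (s k) k).choose_spec.1.1
  have hsm : ∀ k, F (s (k+1)).1 ≤ m (s k).1 + 2⁻¹ ^ k := fun k => (hrec (s k) k).choose_spec.2
  have hFfin : ∀ k, F (s k).1 ≠ ⊤ := fun k => (s k).2
  have chainD : ∀ k l, k ≤ l → (s l).1 ∈ D (s k).1 := by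
    intro k l hkl
    induction l, hkl using Nat.le_induction with
    | base => exact hself _
    | succ n hn ih => exact htrans ih (hsD n)
  have hrmono : ∀ k l, k ≤ l → F (s l).1 ≤ F (s k).1 := fun k l h => hmem_le (chainD k l h)
  set r : ℕ → ℝ := fun k => (F (s k).1).toReal with hr
  have hrant : Antitone r := fun k l h => ENNReal.toReal_mono (hFfin k) (hrmono k l h)
  have hrnn : ∀ k, 0 ≤ r k := fun k => ENNReal.toReal_nonneg
  have hdist : ∀ k l, k ≤ l → δ * dist (s l).1 (s k).1 ≤ r k - r l := by
    intro k l h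
    have h1 : ENNReal.ofReal (δ * dist (s l).1 (s k).1) ≤ F (s k).1 - F (s l).1 :=
      ENNReal.le_sub_of_add_le_left (hFfin l) (chainD k l h)
    have h2 := ENNReal.toReal_mono (ENNReal.sub_ne_top (hFfin k)) h1
    rwa [ENNReal.toReal_ofReal (by positivity),
      ENNReal.toReal_sub_of_le (hrmono k l h) (hFfin k)] at h2
  obtain ⟨L, hL⟩ : ∃ L, Tendsto r atTop (𝓝 L) :=
    ⟨_, tendsto_atTop_ciInf hrant ⟨0, by rintro _ ⟨k, rfl⟩; exact hrnn k⟩⟩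
  have hLle : ∀ k, L ≤ r k := fun k => hrant.le_of_tendsto hL k
  have hCauchy : CauchySeq (fun k => (s k).1) := by
    apply cauchySeq_of_le_tendsto_0 (fun N => (r N - L) / δ)
    · intro n m N hn hm
      have key : ∀ a b : ℕ, N ≤ a → a ≤ b → dist (s b).1 (s a).1 ≤ (r N - L) / δ := by
        intro a b ha hab
        rw [le_div_iff₀ hδ]
        have h1 := hdist a b hab
        have h2 := hLle b
        have h3 := hrant ha
        nlinarith [dist_nonneg (x := (s b).1) (y := (s a).1)]
      rcases le_total n m with h | h
      · rw [dist_comm]; exact key n m hn h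
      · exact key m n hm h
    · have : Tendsto (fun N => (r N - L) / δ) atTop (𝓝 ((L - L) / δ)) :=
        ((hL.sub_const L).div_const δ)
      simpa using this
  obtain ⟨x', hx'⟩ := cauchySeq_tendsto_of_complete hCauchy
  have hFx'le : ∀ j, F x' ≤ F (s j).1 := by
    intro j
    by_contra hcon
    push_neg at hcon
    have hev := hx'.eventually (hF x' (F (s j).1) hcon)
    obtain ⟨k, hk1, hk2⟩ := (hev.and (eventually_ge_atTop j)).exists
    exact absurd (hrmono j k hk2) (not_le.2 hk1)
  have hx't : F x' ≠ ⊤ := ne_top_of_le_ne_top (hFfin 0) (hFx'le 0)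
  have hDk : ∀ k, x' ∈ D (s k).1 := by
    intro k
    show F x' + ENNReal.ofReal (δ * dist x' (s k).1) ≤ F (s k).1
    apply ENNReal.le_of_forall_pos_le_add
    intro η hη _
    have hev1 : ∀ᶠ l in atTop, F x' ≤ F (s l).1 + ↑(η / 2) := by
      rcases eq_or_ne (F x') 0 with h0 | h0
      · exact Eventually.of_forall fun l => by simp [h0]
      · have hc : F x' - ↑(η / 2) < F x' :=
          ENNReal.sub_lt_self hx't h0 (by simp [hη.ne'])
        filter_upwards [hx'.eventually (hF x' _ hc)] with l hl
        calc F x' ≤ (F x' - ↑(η / 2)) + ↑(η / 2) := le_tsub_add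
          _ ≤ F (s l).1 + ↑(η / 2) := add_le_add_left hl.le _
    have hev2 : ∀ᶠ l in atTop,
        ENNReal.ofReal (δ * dist x' (s k).1) ≤
          ENNReal.ofReal (δ * dist (s l).1 (s k).1) + ↑(η / 2) := by
      have hd0 : Tendsto (fun l => δ * dist x' (s l).1) atTop (𝓝 (δ * dist x' x')) :=
        (tendsto_const_nhds.dist hx').const_mul δ
      rw [dist_self, mul_zero] at hd0
      have hpos : (0:ℝ) < ((η / 2 : ℝ≥0) : ℝ) := by
        have h2 : (0:ℝ≥0) < η / 2 := by positivity
        exact_mod_cast h2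
      filter_upwards [hd0.eventually_le_const hpos] with l hl
      calc ENNReal.ofReal (δ * dist x' (s k).1)
          ≤ ENNReal.ofReal (δ * dist x' (s l).1 + δ * dist (s l).1 (s k).1) := by
            apply ENNReal.ofReal_le_ofReal
            nlinarith [dist_triangle x' (s l).1 (s k).1]
        _ ≤ ENNReal.ofReal (δ * dist x' (s l).1) + ENNReal.ofReal (δ * dist (s l).1 (s k).1) :=
            ENNReal.ofReal_add_le
        _ ≤ ↑(η / 2) + ENNReal.ofReal (δ * dist (s l).1 (s k).1) := by
            apply add_le_add_left
            calc ENNReal.ofReal (δ * dist x' (s l).1) ≤ ENNReal.ofReal ((η/2 : ℝ≥0) : ℝ) :=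
                  ENNReal.ofReal_le_ofReal hl
              _ = ↑(η/2) := ENNReal.ofReal_coe_nnreal
        _ = ENNReal.ofReal (δ * dist (s l).1 (s k).1) + ↑(η / 2) := add_comm _ _
    obtain ⟨l, hl1, hl2, hl3⟩ := (hev1.and (hev2.and (eventually_ge_atTop k))).exists
    calc F x' + ENNReal.ofReal (δ * dist x' (s k).1)
        ≤ (F (s l).1 + ↑(η/2)) + (ENNReal.ofReal (δ * dist (s l).1 (s k).1) + ↑(η/2)) :=
          add_le_add hl1 hl2
      _ = (F (s l).1 + ENNReal.ofReal (δ * dist (s l).1 (s k).1)) + (↑(η/2) + ↑(η/2)) := by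
          ring
      _ ≤ F (s k).1 + ↑η := by
          refine add_le_add (chainD k l hl3) (le_of_eq ?_)
          rw [← ENNReal.coe_add, add_halves]
  refine ⟨x', by rw [← hs0]; exact hDk 0, ?_⟩
  intro y
  by_contra hcon
  push_neg at hcon
  have hyx' : y ∈ D x' := le_of_lt hcon
  have hyk : ∀ k, y ∈ D (s k).1 := fun k => htrans (hDk k) hyx'
  have hFy_lt : F y < F x' := lt_of_le_of_lt (le_add_right le_rfl) hcon
  have hcomp : ∀ k, F x' ≤ F y + 2⁻¹ ^ k := by
    intro k
    calc F x' ≤ F (s (k+1)).1 := hFx'le (k+1)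
      _ ≤ m (s k).1 + 2⁻¹ ^ k := hsm k
      _ ≤ F y + 2⁻¹ ^ k := add_le_add_left (iInf₂_le y (hyk k)) _
  have hle : F x' ≤ F y := by
    apply ENNReal.le_of_forall_pos_le_add
    intro η hη _
    obtain ⟨n, hn⟩ := ENNReal.exists_inv_two_pow_lt (a := (η : ℝ≥0∞)) (by simpa using hη.ne')
    exact (hcomp n).trans (add_le_add_right hn.le _)
  exact absurd hle (not_le.2 hFy_lt)

end Helpers

/-- for `f` proper lsc bounded below on a complete metric space and `g : M → ℝ`
continuous with `|∇f| > |∇g|` wherever `|∇f| ≠ 0` on `dom f`, for every `x₀ ∈ dom f` either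
(a) there is a critical point `x̄` of `f` with `f(x₀) - g(x₀) ≥ f(x̄) - g(x̄)`, or
(b) for every sequence `εₙ ↘ 0` there is a sequence `xₙ` (starting at `x₀`) with
`xₙ ∈ εₙ-crit f` for `n ≥ 1`, no convergent subsequence, `Σ εₙ ρ(xₙ,xₙ₋₁) < ∞`, and
`f(xₙ) - g(xₙ)` nonincreasing. -/
theorem crit_or_escaping_sequence {M : Type*} [MetricSpace M] [CompleteSpace M]
    (f : M → EReal) (g : M → ℝ)
    (hproper : ∃ x, f x ≠ ⊤) (hlsc : LowerSemicontinuous f)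
    (hbdd : ∃ C : ℝ, ∀ x, (C : EReal) ≤ f x) (hg : Continuous g)
    (hslope : ∀ x, f x ≠ ⊤ → localSlope f x ≠ 0 →
      localSlope (fun y => (g y : EReal)) x < localSlope f x)
    (x₀ : M) (hx₀ : f x₀ ≠ ⊤) :
    (∃ xb, f xb ≠ ⊤ ∧ localSlope f xb = 0 ∧ f xb - ↑(g xb) ≤ f x₀ - ↑(g x₀)) ∨
    (∀ ε : ℕ → ℝ, StrictAnti ε → (∀ n, 0 < ε n) → Tendsto ε atTop (𝓝 0) →
      ∃ x : ℕ → M, x 0 = x₀ ∧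
        (∀ n : ℕ, 1 ≤ n → f (x n) ≠ ⊤ ∧ localSlope f (x n) ≤ ENNReal.ofReal (ε n)) ∧
        (¬ ∃ (φ : ℕ → ℕ) (l : M), StrictMono φ ∧ Tendsto (x ∘ φ) atTop (𝓝 l)) ∧
        Summable (fun n : ℕ => ε (n + 1) * dist (x (n + 1)) (x n)) ∧
        (∀ n : ℕ, f (x (n + 1)) - ↑(g (x (n + 1))) ≤ f (x n) - ↑(g (x n)))) := by
  classical
  obtain ⟨C, hC⟩ := hbdd
  have hnbot : ∀ z, f z ≠ ⊥ := fun z => ((EReal.bot_lt_coe C).trans_le (hC z)).ne'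
  set F : M → ℝ≥0∞ := fun z => erealPos (f z - ↑C) with hFdef
  have hFval : ∀ z, f z ≠ ⊤ → F z = ENNReal.ofReal ((f z).toReal - C) := by
    intro z hz
    have h1 : f z - ↑C = ↑((f z).toReal - C) := by
      conv_lhs => rw [← EReal.coe_toReal hz (hnbot z)]
      rw [← EReal.coe_sub]
    rw [hFdef]
    simp only [h1, erealPos_coe]
  have hFtop : ∀ z, f z = ⊤ → F z = ⊤ := by
    intro z hz
    rw [hFdef]
    simp [hz, EReal.top_sub_coe, erealPos]
  have hFne : ∀ z, F z ≠ ⊤ ↔ f z ≠ ⊤ := by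
    intro z
    constructor
    · intro h hz; exact h (hFtop z hz)
    · intro h; rw [hFval z h]; exact ENNReal.ofReal_ne_top
  have hge : ∀ z, f z ≠ ⊤ → C ≤ (f z).toReal := by
    intro z hz
    have := EReal.toReal_le_toReal (hC z) (EReal.coe_ne_bot C) hz
    rwa [EReal.toReal_coe] at this
  have lscF : LowerSemicontinuous F := by
    intro z c hc
    have hct : c ≠ ⊤ := ne_top_of_lt hc
    have hkey : (↑(C + c.toReal) : EReal) < f z := by
      rcases eq_or_ne (f z) ⊤ with hz | hz
      · rw [hz]; exact EReal.coe_lt_top _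
      · rw [hFval z hz] at hc
        have h2 : c.toReal < (f z).toReal - C := by
          by_contra h
          push_neg at h
          exact absurd ((ENNReal.ofReal_le_ofReal h).trans (ENNReal.ofReal_toReal hct).le)
            hc.not_ge
        rw [← EReal.coe_toReal hz (hnbot z), EReal.coe_lt_coe_iff]
        linarith
    obtain ⟨p, hp1, hp2⟩ := EReal.exists_between_coe_real hkey
    filter_upwards [hlsc z ↑p hp2] with y hy
    rcases eq_or_ne (f y) ⊤ with hyt | hyt
    · rw [hFtop y hyt]; exact hct.lt_top
    · rw [hFval y hyt]
      have hp1' : C + c.toReal < p := EReal.coe_lt_coe_iff.mp hp1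
      have h2 : p < (f y).toReal := by
        rw [← EReal.coe_toReal hyt (hnbot y)] at hy
        exact EReal.coe_lt_coe_iff.mp hy
      calc c = ENNReal.ofReal c.toReal := (ENNReal.ofReal_toReal hct).symm
        _ < ENNReal.ofReal ((f y).toReal - C) := by
            have hcn : (0:ℝ) ≤ c.toReal := ENNReal.toReal_nonneg
            rw [ENNReal.ofReal_lt_ofReal_iff (by linarith)]; linarith
  have bridge1 : ∀ a b : M, ∀ t : ℝ, 0 ≤ t →
      (F a + ENNReal.ofReal t ≤ F b ↔ f a + ↑t ≤ f b) := by
    intro a b t ht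
    rcases eq_or_ne (f b) ⊤ with hb | hb
    · rw [hFtop b hb, hb]
      simp
    · rcases eq_or_ne (f a) ⊤ with ha | ha
      · refine iff_of_false (fun h => ?_) (fun h => ?_)
        · rw [hFtop a ha] at h
          simp only [top_add, top_le_iff] at h
          exact (hFne b).2 hb h
        · rw [ha, EReal.top_add_coe, top_le_iff] at h
          exact hb h
      · rw [hFval a ha, hFval b hb]
        have h1 : f a + ↑t = ↑((f a).toReal + t) := by
          conv_lhs => rw [← EReal.coe_toReal ha (hnbot a)]
          rw [← EReal.coe_add]
        rw [h1]
        conv_rhs => rw [← EReal.coe_toReal hb (hnbot b)]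
        rw [← ENNReal.ofReal_add (by linarith [hge a ha]) ht,
          ENNReal.ofReal_le_ofReal_iff (by linarith [hge b hb]), EReal.coe_le_coe_iff]
        constructor <;> intro <;> linarith
  have bridge2 : ∀ a b : M, ∀ t : ℝ, 0 ≤ t →
      (F a ≤ F b + ENNReal.ofReal t ↔ f a ≤ f b + ↑t) := by
    intro a b t ht
    rcases eq_or_ne (f b) ⊤ with hb | hb
    · rw [hFtop b hb, hb]
      simp [EReal.top_add_coe]
    · rcases eq_or_ne (f a) ⊤ with ha | ha
      · refine iff_of_false (fun h => ?_) (fun h => ?_)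
        · rw [hFtop a ha, top_le_iff] at h
          exact ENNReal.add_ne_top.2 ⟨(hFne b).2 hb, ENNReal.ofReal_ne_top⟩ h
        · rw [ha, top_le_iff] at h
          have : f b + (↑t : EReal) = ↑((f b).toReal + t) := by
            conv_lhs => rw [← EReal.coe_toReal hb (hnbot b)]
            rw [← EReal.coe_add]
          rw [this] at h
          exact EReal.coe_ne_top _ h
      · rw [hFval a ha, hFval b hb]
        have h1 : f b + ↑t = ↑((f b).toReal + t) := by
          conv_lhs => rw [← EReal.coe_toReal hb (hnbot b)]
          rw [← EReal.coe_add]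
        rw [h1]
        conv_rhs => rw [← EReal.coe_toReal ha (hnbot a)]
        rw [← ENNReal.ofReal_add (by linarith [hge b hb]) ht,
          ENNReal.ofReal_le_ofReal_iff (by linarith [hge b hb]), EReal.coe_le_coe_iff]
        constructor <;> intro <;> linarith
  -- the key one-step construction
  have key : ∀ x : M, f x ≠ ⊤ → ∀ δ : ℝ, 0 < δ →
      ∃ x' : M, f x' ≠ ⊤ ∧ f x' + ↑(δ * dist x' x) ≤ f x ∧
        f x' - ↑(g x') ≤ f x - ↑(g x) ∧
        (∀ y, f y - ↑(g y) ≤ f x' - ↑(g x') → f x' ≤ f y + ↑(δ * dist y x')) ∧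
        localSlope f x' ≤ ENNReal.ofReal δ := by
    intro x hx δ hδ
    set S : Set M := {y | f y - ↑(g y) ≤ f x - ↑(g x)} with hS
    set F' : M → ℝ≥0∞ := fun y => if y ∈ S then F y else ⊤ with hF'def
    have hxS : x ∈ S := by simp only [hS, Set.mem_setOf_eq]; exact le_rfl
    have hF'x : F' x = F x := if_pos hxS
    have hF'le : ∀ y, F y ≤ F' y := by
      intro y
      by_cases h : y ∈ S
      · rw [hF'def]; simp [h]
      · rw [hF'def]; simp [h]
    have hvx : f x - ↑(g x) = ↑((f x).toReal - g x) := by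
      conv_lhs => rw [← EReal.coe_toReal hx (hnbot x)]
      rw [← EReal.coe_sub]
    set v : ℝ := (f x).toReal - g x with hvdef
    have lscF' : LowerSemicontinuous F' := by
      intro z c hc
      by_cases hz : z ∈ S
      · rw [hF'def] at hc ⊢
        simp only [if_pos hz] at hc
        filter_upwards [lscF z c hc] with y hy
        exact hy.trans_le (hF'le y)
      · have hzS : f x - ↑(g x) < f z - ↑(g z) := not_le.mp hz
        rw [hvx] at hzS
        have h1 : (↑(v + g z) : EReal) < f z := by
          by_contra hcon
          push_neg at hcon
          have h2 : f z - ↑(g z) ≤ ↑v := by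
            rw [ereal_sub_coe_le, ← EReal.coe_add]
            exact hcon
          exact absurd h2 (not_le.2 hzS)
        obtain ⟨p, hp1, hp2⟩ := EReal.exists_between_coe_real h1
        have hgz : g z < p - v := by
          have := EReal.coe_lt_coe_iff.mp hp1
          linarith
        have hgope : ∀ᶠ y in 𝓝 z, g y < p - v :=
          (hg.tendsto z).eventually_lt_const hgz
        filter_upwards [hlsc z ↑p hp2, hgope] with y hy1 hy2
        have hyS : y ∉ S := by
          intro hyS
          rw [hS, Set.mem_setOf_eq, hvx, ereal_sub_coe_le] at hyS
          have h3 : f y ≤ ↑(v + g y) := by rwa [EReal.coe_add]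
          have h4 : (↑(v + g y) : EReal) < ↑p := EReal.coe_lt_coe_iff.2 (by linarith)
          exact absurd (h3.trans_lt h4) (not_lt.2 hy1.le)
        have hct : c ≠ ⊤ := by
          rw [hF'def] at hc
          simp only [if_neg hz] at hc
          exact ne_top_of_lt hc
        rw [hF'def]
        simp only [if_neg hyS]
        exact hct.lt_top
    have hF'xt : F' x ≠ ⊤ := by rw [hF'x]; exact (hFne x).2 hx
    obtain ⟨x', he1, he2⟩ := ekeland_ennreal F' lscF' x hF'xt hδ
    have hx'S : x' ∈ S := by
      by_contra h
      have h1 : F' x' = ⊤ := if_neg h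
      rw [h1, hF'x] at he1
      simp only [top_add, top_le_iff] at he1
      exact (hFne x).2 hx he1
    have hF'x' : F' x' = F x' := if_pos hx'S
    rw [hF'x', hF'x] at he1
    have hFx't : F x' ≠ ⊤ :=
      ne_top_of_le_ne_top ((hFne x).2 hx) (le_trans (le_add_right le_rfl) he1)
    have hfx't : f x' ≠ ⊤ := (hFne x').1 hFx't
    have hii : f x' + ↑(δ * dist x' x) ≤ f x :=
      (bridge1 x' x _ (by positivity)).1 he1
    have hiv : ∀ y, f y - ↑(g y) ≤ f x' - ↑(g x') → f x' ≤ f y + ↑(δ * dist y x') := by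
      intro y hy
      have hyS : y ∈ S := le_trans hy hx'S
      have h2 := he2 y
      rw [hF'x', hF'def] at h2
      simp only [if_pos hyS] at h2
      exact (bridge2 x' y _ (by positivity)).1 h2
    refine ⟨x', hfx't, hii, hx'S, hiv, ?_⟩
    rcases eq_or_ne (localSlope f x') 0 with h0 | h0
    · rw [h0]; exact zero_le
    · have hlt := hslope x' hfx't h0
      apply localSlope_le_of_pointwise f _ x' _ ?_ hlt
      intro y hyx
      rcases le_or_gt (f y - ↑(g y)) (f x' - ↑(g x')) with hcase | hcase
      · refine le_sup_of_le_left ?_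
        apply div_edist_le hyx hδ.le
        rw [ereal_sub_le_coe, add_comm]
        exact hiv y hcase
      · refine le_sup_of_le_right ?_
        have h6 := erealPos_sub_sub hfx't (hnbot x') hcase.le
        calc erealPos (f x' - f y) / edist x' y
            ≤ ENNReal.ofReal (g x' - g y) / edist x' y := ENNReal.div_le_div_right h6 _
          _ = erealPos (↑(g x') - ↑(g y)) / edist x' y := by rw [← EReal.coe_sub, erealPos_coe]
  -- main dichotomy
  by_cases hA : ∃ xb, f xb ≠ ⊤ ∧ localSlope f xb = 0 ∧ f xb - ↑(g xb) ≤ f x₀ - ↑(g x₀)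
  · exact Or.inl hA
  · right
    intro ε hεanti hεpos hεlim
    have hstep' : ∀ (p : {p : M // f p ≠ ⊤ ∧ f p - ↑(g p) ≤ f x₀ - ↑(g x₀)}) (n : ℕ),
        ∃ x' : M, f x' ≠ ⊤ ∧ f x' + ↑(ε (n+1) * dist x' p.1) ≤ f p.1 ∧
          f x' - ↑(g x') ≤ f p.1 - ↑(g p.1) ∧
          (∀ y, f y - ↑(g y) ≤ f x' - ↑(g x') → f x' ≤ f y + ↑(ε (n+1) * dist y x')) ∧
          localSlope f x' ≤ ENNReal.ofReal (ε (n+1)) :=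
      fun p n => key p.1 p.2.1 (ε (n+1)) (hεpos (n+1))
    let c : ℕ → {p : M // f p ≠ ⊤ ∧ f p - ↑(g p) ≤ f x₀ - ↑(g x₀)} := fun n =>
      Nat.rec ⟨x₀, hx₀, le_rfl⟩ (fun n p =>
        ⟨(hstep' p n).choose, (hstep' p n).choose_spec.1,
          (hstep' p n).choose_spec.2.2.1.trans p.2.2⟩) n
    set x : ℕ → M := fun n => (c n).1 with hxdef
    have hx0 : x 0 = x₀ := rfl
    have hQ : ∀ n : ℕ, f (x (n+1)) ≠ ⊤ ∧
        f (x (n+1)) + ↑(ε (n+1) * dist (x (n+1)) (x n)) ≤ f (x n) ∧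
        f (x (n+1)) - ↑(g (x (n+1))) ≤ f (x n) - ↑(g (x n)) ∧
        (∀ y, f y - ↑(g y) ≤ f (x (n+1)) - ↑(g (x (n+1))) →
          f (x (n+1)) ≤ f y + ↑(ε (n+1) * dist y (x (n+1)))) ∧
        localSlope f (x (n+1)) ≤ ENNReal.ofReal (ε (n+1)) :=
      fun n => (hstep' (c n) n).choose_spec
    have hxt : ∀ n, f (x n) ≠ ⊤ := fun n => (c n).2.1
    set r : ℕ → ℝ := fun n => (f (x n)).toReal with hrdef
    have hrstep : ∀ n, r (n+1) + ε (n+1) * dist (x (n+1)) (x n) ≤ r n := by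
      intro n
      have h := (hQ n).2.1
      rw [← EReal.coe_toReal (hxt (n+1)) (hnbot _), ← EReal.coe_toReal (hxt n) (hnbot _),
        ← EReal.coe_add, EReal.coe_le_coe_iff] at h
      exact h
    have hrant : Antitone r := antitone_nat_of_succ_le fun n => by
      have := hrstep n
      have h2 : 0 ≤ ε (n+1) * dist (x (n+1)) (x n) :=
        mul_nonneg (hεpos (n+1)).le dist_nonneg
      linarith
    have hrC : ∀ n, C ≤ r n := fun n => hge _ (hxt n)
    have hsum : Summable (fun n : ℕ => ε (n + 1) * dist (x (n + 1)) (x n)) := by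
      apply summable_of_sum_range_le (c := r 0 - C)
        (fun n => mul_nonneg (hεpos _).le dist_nonneg)
      intro n
      have htel : ∀ n : ℕ, ∑ i ∈ Finset.range n, ε (i+1) * dist (x (i+1)) (x i) ≤ r 0 - r n := by
        intro n
        induction n with
        | zero => simp
        | succ k ih =>
          rw [Finset.sum_range_succ]
          have := hrstep k
          linarith
      linarith [htel n, hrC n]
    set v : ℕ → ℝ := fun n => r n - g (x n) with hvdef
    have hvval : ∀ n, f (x n) - ↑(g (x n)) = ↑(v n) := by
      intro n
      conv_lhs => rw [← EReal.coe_toReal (hxt n) (hnbot _)]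
      rw [← EReal.coe_sub]
    have hvmono : Antitone v := antitone_nat_of_succ_le fun n => by
      have := (hQ n).2.2.1
      rw [hvval (n+1), hvval n, EReal.coe_le_coe_iff] at this
      exact this
    have hnosub : ¬ ∃ (φ : ℕ → ℕ) (l : M), StrictMono φ ∧ Tendsto (x ∘ φ) atTop (𝓝 l) := by
      rintro ⟨φ, l, hφ, hl⟩
      apply hA
      have hφtop : Tendsto φ atTop atTop := hφ.tendsto_atTop
      have hlim : ∀ (B : ℝ) (b : ℕ → ℝ), Tendsto b atTop (𝓝 B) →
          (∀ᶠ k in atTop, f (x (φ k)) ≤ ↑(b k)) → f l ≤ ↑B := by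
        intro B b hb hev
        by_contra hlt
        push_neg at hlt
        obtain ⟨q, hq1, hq2⟩ := EReal.exists_between_coe_real hlt
        have hev2 : ∀ᶠ k in atTop, (↑q : EReal) < f (x (φ k)) := hl.eventually (hlsc l ↑q hq2)
        have hev3 : ∀ᶠ k in atTop, b k < q := hb.eventually_lt_const (EReal.coe_lt_coe_iff.mp hq1)
        obtain ⟨k, h1, h2, h3⟩ := (hev2.and (hev3.and hev)).exists
        have h4 : (↑q : EReal) < ↑(b k) := h1.trans_le h3
        exact absurd (EReal.coe_lt_coe_iff.mp h4) (not_lt.2 h2.le)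
      have hflr0 : f l ≤ ↑(r 0) :=
        hlim (r 0) (fun _ => r 0) tendsto_const_nhds (Eventually.of_forall fun k => by
          rw [← EReal.coe_toReal (hxt (φ k)) (hnbot _)]
          exact EReal.coe_le_coe_iff.2 (hrant (Nat.zero_le _)))
      have hfl_t : f l ≠ ⊤ := ne_top_of_le_ne_top (EReal.coe_ne_top _) hflr0
      have hgl : Tendsto (fun k => g (x (φ k))) atTop (𝓝 (g l)) := (hg.tendsto l).comp hl
      have hflv : ∀ n, f l ≤ ↑(v n) + ↑(g l) := by
        intro n
        have hb : Tendsto (fun k => v n + g (x (φ k))) atTop (𝓝 (v n + g l)) :=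
          tendsto_const_nhds.add hgl
        have h5 := hlim (v n + g l) _ hb ?_
        · rwa [EReal.coe_add] at h5
        · filter_upwards [hφtop.eventually_ge_atTop n] with k hk
          have h3 : f (x (φ k)) - ↑(g (x (φ k))) ≤ ↑(v n) :=
            (hvval (φ k)).le.trans (EReal.coe_le_coe_iff.2 (hvmono hk))
          rw [ereal_sub_coe_le] at h3
          rwa [EReal.coe_add]
      have hfl_le : ∀ n, f l - ↑(g l) ≤ ↑(v n) := fun n => ereal_sub_coe_le.2 (hflv n)
      have hcrit : ∀ y, f y - ↑(g y) ≤ f l - ↑(g l) → f l ≤ f y := by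
        intro y hy
        rcases eq_or_ne (f y) ⊤ with hyt | hyt
        · rw [hyt]; exact le_top
        · have hyb : ∀ m : ℕ, f (x (m+1)) ≤ f y + ↑(ε (m+1) * dist y (x (m+1))) := by
            intro m
            apply (hQ m).2.2.2.1
            calc f y - ↑(g y) ≤ f l - ↑(g l) := hy
              _ ≤ ↑(v (m+1)) := hfl_le (m+1)
              _ = f (x (m+1)) - ↑(g (x (m+1))) := (hvval (m+1)).symm
          have hfy : f y = ↑((f y).toReal) := (EReal.coe_toReal hyt (hnbot y)).symm
          rw [hfy]
          apply hlim ((f y).toReal) (fun k => (f y).toReal + ε (φ k) * dist y (x (φ k)))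
          · have h1 : Tendsto (fun k => ε (φ k)) atTop (𝓝 0) := hεlim.comp hφtop
            have h2 : Tendsto (fun k => dist y (x (φ k))) atTop (𝓝 (dist y l)) :=
              tendsto_const_nhds.dist hl
            have h3 : Tendsto (fun k => (f y).toReal + ε (φ k) * dist y (x (φ k))) atTop
                (𝓝 ((f y).toReal + 0 * dist y l)) := tendsto_const_nhds.add (h1.mul h2)
            simpa using h3
          · filter_upwards [hφtop.eventually_ge_atTop 1] with k hk
            obtain ⟨m, hm⟩ : ∃ m, φ k = m + 1 := ⟨φ k - 1, by omega⟩
            have h4 := hyb m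
            rw [← hm] at h4
            rw [EReal.coe_add, ← hfy]
            exact h4
      have hslope0 : localSlope f l = 0 := by
        by_contra h0
        have hlt := hslope l hfl_t h0
        have h7 := localSlope_le_of_pointwise f (fun y => (↑(g y) : EReal)) l 0 ?_ hlt
        · exact h0 (le_zero_iff.mp h7)
        · intro y hyl
          rcases le_or_gt (f y - ↑(g y)) (f l - ↑(g l)) with hc1 | hc1
          · refine le_sup_of_le_left ?_
            have h6 : f l - f y ≤ ((0 * dist y l : ℝ) : EReal) := by
              rw [zero_mul, ereal_sub_le_coe, EReal.coe_zero, zero_add]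
              exact hcrit y hc1
            have h8 := div_edist_le hyl le_rfl h6
            simpa using h8
          · refine le_sup_of_le_right ?_
            have h6 := erealPos_sub_sub hfl_t (hnbot l) hc1.le
            calc erealPos (f l - f y) / edist l y
                ≤ ENNReal.ofReal (g l - g y) / edist l y := ENNReal.div_le_div_right h6 _
              _ = erealPos (↑(g l) - ↑(g y)) / edist l y := by rw [← EReal.coe_sub, erealPos_coe]
      exact ⟨l, hfl_t, hslope0, (hfl_le 0).trans (hvval 0).symm.le⟩
    refine ⟨x, rfl, ?_, hnosub, hsum, fun n => (hQ n).2.2.1⟩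
    intro n hn
    obtain ⟨m, rfl⟩ : ∃ m, n = m + 1 := ⟨n - 1, by omega⟩
    exact ⟨(hQ m).1, (hQ m).2.2.2.2⟩
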